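/- If x^k ∈ dom(F) is not weakly Pareto optimal, then d^k := p_α(x^k) - x^k ≠ 0 and there exists δ > 0 such that for all t ∈ (0, δ] and all j = 1,…,m, G_j(x^k + t d^k) ≤ G_j(x^k) + t⟨∇G_j(x^k), d^k⟩ + t(γ/2)‖d^k‖². Consequently, the backtracking line search of the MPG algorithm terminates in finitely many steps. -/

import Mathlib

open RealInnerProductSpace

lemma dirDeriv {n : ℕ} {G : EuclideanSpace ℝ (Fin n) → ℝ} {g x : EuclideanSpace ℝ (Fin n)}
    (h : HasGradientAt G g x) (v : EuclideanSpace ℝ (Fin n)) :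
    HasDerivAt (fun t : ℝ => G (x + t • v)) ⟪g, v⟫ 0 := by
  have hline : HasDerivAt (fun t : ℝ => x + t • v) v 0 := by
    simpa using ((hasDerivAt_id (0:ℝ)).smul_const v).const_add x
  have hF := (hasGradientAt_iff_hasFDerivAt.mp h)
  have hF' : HasFDerivAt G ((InnerProductSpace.toDual ℝ _ g : _ →L[ℝ] ℝ)) (x + (0:ℝ) • v) := by
    simpa using hF
  have := hF'.comp_hasDerivAt 0 hline
  simp at this
  exact this

lemma gradIneq {n : ℕ} {G : EuclideanSpace ℝ (Fin n) → ℝ} {g : EuclideanSpace ℝ (Fin n)}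
    (hconv : ConvexOn ℝ Set.univ G) {x : EuclideanSpace ℝ (Fin n)}
    (h : HasGradientAt G g x) (y : EuclideanSpace ℝ (Fin n)) :
    ⟪g, y - x⟫ ≤ G y - G x := by
  have hψ : ConvexOn ℝ Set.univ (fun t : ℝ => G (x + t • (y - x))) := by
    have := hconv.comp_affineMap (AffineMap.lineMap x y)
    simp only [AffineMap.coe_lineMap] at this
    have heq : (fun t : ℝ => G (x + t • (y - x))) = G ∘ fun c : ℝ => c • (y -ᵥ x) +ᵥ x := by
      funext t
      simp [add_comm]
    rw [heq]
    simpa using this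
  have hd := dirDeriv h (y - x)
  have := hψ.le_slope_of_hasDerivAt (Set.mem_univ (0:ℝ)) (Set.mem_univ 1) one_pos hd
  simpa [slope_def_field] using this

/-- If `x^k ∈ dom F` is not weakly Pareto optimal, then `d^k = p_α(x^k) - x^k ≠ 0` and there
is `δ > 0` such that the sufficient-decrease test holds for all `t ∈ (0, δ]` and all `j`;
hence the backtracking line search of the MPG algorithm terminates finitely. -/
theorem lineSearch_wellDefined {n m : ℕ} (hm : 0 < m)
    (G : Fin m → EuclideanSpace ℝ (Fin n) → ℝ)
    (G' : Fin m → EuclideanSpace ℝ (Fin n) → EuclideanSpace ℝ (Fin n))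
    (H : Fin m → EuclideanSpace ℝ (Fin n) → ℝ)
    (dom : Set (EuclideanSpace ℝ (Fin n)))
    (hGconv : ∀ j, ConvexOn ℝ Set.univ (G j))
    (hGdiff : ∀ j x, HasGradientAt (G j) (G' j x) x)
    (hG'cont : ∀ j, Continuous (G' j))
    (hHconv : ∀ j, ConvexOn ℝ dom (H j))
    (hHcont : ∀ j, ContinuousOn (H j) dom)
    (hdomne : dom.Nonempty) (hdomcl : IsClosed dom) (hdomconv : Convex ℝ dom)
    (α γ : ℝ) (hα : 0 < α) (hγ : 0 < γ) (hγ2 : γ < 2 / α)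
    (xk : EuclideanSpace ℝ (Fin n)) (hxk : xk ∈ dom)
    (p : EuclideanSpace ℝ (Fin n)) (hp : p ∈ dom)
    (hpmin : IsMinOn
      (fun u => (⨆ j, (⟪G' j xk, u - xk⟫ + H j u - H j xk)) + 1 / (2 * α) * ‖u - xk‖ ^ 2)
      dom p)
    (hnotWP : ∃ y ∈ dom, ∀ j, G j y + H j y < G j xk + H j xk) :
    p - xk ≠ 0 ∧ ∃ δ > 0, ∀ t ∈ Set.Ioc (0 : ℝ) δ, ∀ j,
      G j (xk + t • (p - xk)) ≤
        G j xk + t * ⟪G' j xk, p - xk⟫ + t * (γ / 2) * ‖p - xk‖ ^ 2 := by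
  haveI : Nonempty (Fin m) := ⟨⟨0, hm⟩⟩
  obtain ⟨y, hy, hylt⟩ := hnotWP
  -- Part 1
  have hd : p - xk ≠ 0 := by
    intro h0
    have hpx : p = xk := sub_eq_zero.mp h0
    set M : ℝ := Finset.univ.sup' (Finset.univ_nonempty) fun j =>
      (G j y + H j y) - (G j xk + H j xk) with hM
    have hMneg : M < 0 := by
      rw [hM]
      exact (Finset.sup'_lt_iff Finset.univ_nonempty).mpr fun j _ => by linarith [hylt j]
    set C : ℝ := 1 / (2 * α) * ‖y - xk‖ ^ 2 with hC
    have hC0 : 0 ≤ C := by positivity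
    set t : ℝ := min 1 (-M / (C + 1)) with ht
    have ht0 : 0 < t := lt_min one_pos (div_pos (by linarith) (by linarith))
    have ht1 : t ≤ 1 := min_le_left _ _
    have htC : t * (C + 1) ≤ -M := by
      rw [← le_div_iff₀ (by linarith)]
      exact min_le_right _ _
    set u : EuclideanSpace ℝ (Fin n) := xk + t • (y - xk) with hu
    have hucomb : u = (1 - t) • xk + t • y := by
      rw [hu]; module
    have humem : u ∈ dom := by
      rw [hucomb]
      exact hdomconv hxk hy (by linarith) (le_of_lt ht0) (by ring)
    have hkey := hpmin humem
    simp only [hpx, Set.mem_setOf_eq] at hkey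
    -- φ(xk) = 0
    have hφxk : (⨆ j, (⟪G' j xk, xk - xk⟫ + H j xk - H j xk)) +
        1 / (2 * α) * ‖xk - xk‖ ^ 2 = 0 := by
      simp
    rw [hφxk] at hkey
    -- bound φ(u)
    have hbound : ∀ j, ⟪G' j xk, u - xk⟫ + H j u - H j xk ≤ t * M := by
      intro j
      have hux : u - xk = t • (y - xk) := by rw [hu]; abel
      have h1 : ⟪G' j xk, u - xk⟫ = t * ⟪G' j xk, y - xk⟫ := by
        rw [hux, real_inner_smul_right]
      have h2 : ⟪G' j xk, y - xk⟫ ≤ G j y - G j xk :=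
        gradIneq (hGconv j) (hGdiff j xk) y
      have h3 : H j u ≤ (1 - t) * H j xk + t * H j y := by
        rw [hucomb]
        exact (hHconv j).2 hxk hy (by linarith) (le_of_lt ht0) (by ring)
      have h4 : ((G j y + H j y) - (G j xk + H j xk)) ≤ M :=
        Finset.le_sup' (fun j => (G j y + H j y) - (G j xk + H j xk)) (Finset.mem_univ j)
      nlinarith [mul_le_mul_of_nonneg_left h2 ht0.le,
        mul_le_mul_of_nonneg_left h4 ht0.le]
    have hsup : (⨆ j, (⟪G' j xk, u - xk⟫ + H j u - H j xk)) ≤ t * M := ciSup_le hbound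
    have hnorm : ‖u - xk‖ ^ 2 = t ^ 2 * ‖y - xk‖ ^ 2 := by
      have hux : u - xk = t • (y - xk) := by rw [hu]; abel
      rw [hux, norm_smul, mul_pow]
      simp [abs_of_pos ht0]
    have hquad : 1 / (2 * α) * (t ^ 2 * ‖y - xk‖ ^ 2) = t ^ 2 * C := by rw [hC]; ring
    have hφu : (⨆ j, (⟪G' j xk, u - xk⟫ + H j u - H j xk)) +
        1 / (2 * α) * ‖u - xk‖ ^ 2 ≤ t * M + t ^ 2 * C := by
      rw [hnorm, hquad]
      linarith [hsup]
    have h5 : t * C + t ≤ -M := by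
      calc t * C + t = t * (C + 1) := by ring
        _ ≤ -M := htC
    have h6 : M + t * C < 0 := by linarith
    have h7 : t * M + t ^ 2 * C = t * (M + t * C) := by ring
    have h8 : t * M + t ^ 2 * C < 0 := by
      rw [h7]; exact mul_neg_of_pos_of_neg ht0 h6
    linarith [hkey.trans (hφu)]
  refine ⟨hd, ?_⟩
  -- Part 2
  set d := p - xk with hdd
  set c : ℝ := γ / 2 * ‖d‖ ^ 2 with hc
  have hc0 : 0 < c := by
    have : 0 < ‖d‖ := norm_pos_iff.mpr hd
    positivity
  have hev : ∀ᶠ t in nhdsWithin (0:ℝ) (Set.Ioi 0), ∀ j,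
      slope (fun s : ℝ => G j (xk + s • d)) 0 t < ⟪G' j xk, d⟫ + c := by
    rw [Filter.eventually_all]
    intro j
    have hder := dirDeriv (hGdiff j xk) d
    have hslope := hasDerivAt_iff_tendsto_slope.mp hder
    have := hslope.eventually_lt_const (by linarith : ⟪G' j xk, d⟫ < ⟪G' j xk, d⟫ + c)
    exact nhdsWithin_mono 0 (by intro s hs; simp at hs ⊢; exact ne_of_gt hs) this
  obtain ⟨δ, hδ, hsub⟩ := mem_nhdsGT_iff_exists_Ioc_subset.mp hev
  refine ⟨δ, hδ, ?_⟩
  intro t ht j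
  have hj := hsub ht j
  rw [slope_def_field] at hj
  have ht0 : 0 < t := ht.1
  have : (G j (xk + t • d) - G j (xk + (0:ℝ) • d)) / (t - 0) ≤ ⟪G' j xk, d⟫ + c := by
    simpa [div_eq_inv_mul] using hj.le
  rw [div_le_iff₀ (by simpa using ht0)] at this
  simp only [zero_smul, add_zero, sub_zero] at this
  have := sub_le_iff_le_add.mp this
  rw [hc] at this
  nlinarith [this]
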